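/- For every t ∈ ℝ, g₂(g₁(t)) = g₁(g₂(g₂(t))). (This is the Baumslag–Solitar relation t x t⁻¹ = x² satisfied by t ↦ g₁, x ↦ g₂.) -/

import Mathlib

/-- The element `g₁` of the Lodha–Moore group as a piecewise fractional linear map. -/
noncomputable def g₁ (t : ℝ) : ℝ :=
  if t ≤ 0 then t
  else if t ≤ 1 / 2 then 2 * t / (2 * t + 1)
  else if t ≤ 1 then 1 / (3 - 2 * t)
  else t

/-- The element `g₂` of the Lodha–Moore group as a piecewise fractional linear map. -/
noncomputable def g₂ (t : ℝ) : ℝ :=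
  if t ≤ 0 then t
  else if t ≤ 1 / 3 then t / (1 - t)
  else if t ≤ 1 / 2 then (4 * t - 1) / (5 * t - 1)
  else if t ≤ 1 then 1 / (2 - t)
  else t

lemma g1_neg {t : ℝ} (h : t ≤ 0) : g₁ t = t := by rw [g₁, if_pos h]

lemma g1_lo {t : ℝ} (h0 : 0 < t) (h1 : t ≤ 1/2) : g₁ t = 2*t/(2*t+1) := by
  rw [g₁, if_neg (by linarith), if_pos (by linarith)]

lemma g1_hi {t : ℝ} (h0 : 1/2 < t) (h1 : t ≤ 1) : g₁ t = 1/(3-2*t) := by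
  rw [g₁, if_neg (by linarith), if_neg (by linarith), if_pos (by linarith)]

lemma g1_gt {t : ℝ} (h : 1 < t) : g₁ t = t := by
  rw [g₁, if_neg (by linarith), if_neg (by linarith), if_neg (by linarith)]

lemma g2_neg {t : ℝ} (h : t ≤ 0) : g₂ t = t := by rw [g₂, if_pos h]

lemma g2_a {t : ℝ} (h0 : 0 < t) (h1 : t ≤ 1/3) : g₂ t = t/(1-t) := by
  rw [g₂, if_neg (by linarith), if_pos (by linarith)]

lemma g2_b {t : ℝ} (h0 : 1/3 < t) (h1 : t ≤ 1/2) : g₂ t = (4*t-1)/(5*t-1) := by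
  rw [g₂, if_neg (by linarith), if_neg (by linarith), if_pos (by linarith)]

lemma g2_c {t : ℝ} (h0 : 1/2 < t) (h1 : t ≤ 1) : g₂ t = 1/(2-t) := by
  rw [g₂, if_neg (by linarith), if_neg (by linarith), if_neg (by linarith),
    if_pos (by linarith)]

lemma g2_gt {t : ℝ} (h : 1 < t) : g₂ t = t := by
  rw [g₂, if_neg (by linarith), if_neg (by linarith), if_neg (by linarith),
    if_neg (by linarith)]

set_option maxHeartbeats 1000000 in
/-- The Baumslag–Solitar relation `t x t⁻¹ = x²` satisfied by `t ↦ g₁`, `x ↦ g₂`. -/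
theorem bs_relation (t : ℝ) : g₂ (g₁ t) = g₁ (g₂ (g₂ t)) := by
  rcases le_or_gt t 0 with h | h0
  · simp only [g1_neg h, g2_neg h]
  rcases le_or_gt t (1/4) with h14 | h14
  · -- 0 < t ≤ 1/4
    have hb1 : (2*t+1 : ℝ) ≠ 0 := by positivity
    have hb2 : (1-t : ℝ) ≠ 0 := ne_of_gt (by linarith)
    have hb3 : (1-2*t : ℝ) ≠ 0 := ne_of_gt (by linarith)
    have e1 : g₁ t = 2*t/(2*t+1) := g1_lo h0 (by linarith)
    have e2 : g₂ (2*t/(2*t+1)) = 2*t := by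
      rw [g2_a (div_pos (by linarith) (by linarith))
        (by rw [div_le_div_iff₀ (by linarith) (by norm_num)]; linarith)]
      have h1 : 1 - 2*t/(2*t+1) = 1/(2*t+1) := by field_simp; ring
      have hB : 1 - 2*t/(2*t+1) ≠ 0 := by
        rw [h1]; exact ne_of_gt (one_div_pos.mpr (by linarith))
      rw [div_eq_iff hB]; field_simp [hb1]; try ring; try tauto
    have e3 : g₂ t = t/(1-t) := g2_a h0 (by linarith)
    have e4 : g₂ (t/(1-t)) = t/(1-2*t) := by
      rw [g2_a (div_pos h0 (by linarith))
        (by rw [div_le_div_iff₀ (by linarith) (by norm_num)]; linarith)]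
      have h1 : 1 - t/(1-t) = (1-2*t)/(1-t) := by field_simp; try ring
      have hB : 1 - t/(1-t) ≠ 0 := by
        rw [h1]; exact ne_of_gt (div_pos (by linarith) (by linarith))
      rw [div_eq_div_iff hB hb3]; field_simp [hb2]; try ring; try tauto
    have e5 : g₁ (t/(1-2*t)) = 2*t := by
      rw [g1_lo (div_pos h0 (by linarith))
        (by rw [div_le_div_iff₀ (by linarith) (by norm_num)]; linarith)]
      have h1 : 2*(t/(1-2*t))+1 = 1/(1-2*t) := by field_simp; try ring
      have hB : 2*(t/(1-2*t))+1 ≠ 0 := by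
        rw [h1]; exact ne_of_gt (one_div_pos.mpr (by linarith))
      rw [div_eq_iff hB]; field_simp [hb3]; try ring; try tauto
    rw [e1, e2, e3, e4, e5]
  rcases le_or_gt t (1/3) with h13 | h13
  · -- 1/4 < t ≤ 1/3
    have hb1 : (2*t+1 : ℝ) ≠ 0 := by positivity
    have hb2 : (1-t : ℝ) ≠ 0 := ne_of_gt (by linarith)
    have hb3 : (6*t-1 : ℝ) ≠ 0 := ne_of_gt (by linarith)
    have hb4 : (8*t-1 : ℝ) ≠ 0 := ne_of_gt (by linarith)
    have e1 : g₁ t = 2*t/(2*t+1) := g1_lo h0 (by linarith)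
    have e2 : g₂ (2*t/(2*t+1)) = (6*t-1)/(8*t-1) := by
      rw [g2_b (by rw [div_lt_div_iff₀ (by norm_num) (by linarith)]; linarith)
        (by rw [div_le_div_iff₀ (by linarith) (by norm_num)]; linarith)]
      have h1 : 5*(2*t/(2*t+1))-1 = (8*t-1)/(2*t+1) := by field_simp; try ring
      have hB : 5*(2*t/(2*t+1))-1 ≠ 0 := by
        rw [h1]; exact ne_of_gt (div_pos (by linarith) (by linarith))
      rw [div_eq_div_iff hB hb4]; field_simp [hb1]; try ring; try tauto
    have e3 : g₂ t = t/(1-t) := g2_a h0 h13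
    have e4 : g₂ (t/(1-t)) = (5*t-1)/(6*t-1) := by
      rw [g2_b (by rw [div_lt_div_iff₀ (by norm_num) (by linarith)]; linarith)
        (by rw [div_le_div_iff₀ (by linarith) (by norm_num)]; linarith)]
      have h1 : 5*(t/(1-t))-1 = (6*t-1)/(1-t) := by field_simp; try ring
      have hB : 5*(t/(1-t))-1 ≠ 0 := by
        rw [h1]; exact ne_of_gt (div_pos (by linarith) (by linarith))
      rw [div_eq_div_iff hB hb3]; field_simp [hb2]; try ring; try tauto
    have e5 : g₁ ((5*t-1)/(6*t-1)) = (6*t-1)/(8*t-1) := by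
      rw [g1_hi (by rw [div_lt_div_iff₀ (by norm_num) (by linarith)]; linarith)
        (by rw [div_le_one (by linarith)]; linarith)]
      have h1 : 3-2*((5*t-1)/(6*t-1)) = (8*t-1)/(6*t-1) := by field_simp [show (t*6-1 : ℝ) ≠ 0 by rw [mul_comm]; exact hb3]; try ring
      have hB : 3-2*((5*t-1)/(6*t-1)) ≠ 0 := by
        rw [h1]; exact ne_of_gt (div_pos (by linarith) (by linarith))
      rw [div_eq_div_iff hB hb4]; field_simp [hb3, show (t*6-1 : ℝ) ≠ 0 by rw [mul_comm]; exact hb3]; try ring; try tauto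
    rw [e1, e2, e3, e4, e5]
  rcases le_or_gt t (1/2) with h12 | h12
  · -- 1/3 < t ≤ 1/2
    have hb1 : (2*t+1 : ℝ) ≠ 0 := by positivity
    have hb2 : (5*t-1 : ℝ) ≠ 0 := ne_of_gt (by linarith)
    have hb3 : (6*t-1 : ℝ) ≠ 0 := ne_of_gt (by linarith)
    have hb4 : (8*t-1 : ℝ) ≠ 0 := ne_of_gt (by linarith)
    have e1 : g₁ t = 2*t/(2*t+1) := g1_lo h0 h12
    have e2 : g₂ (2*t/(2*t+1)) = (6*t-1)/(8*t-1) := by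
      rw [g2_b (by rw [div_lt_div_iff₀ (by norm_num) (by linarith)]; linarith)
        (by rw [div_le_div_iff₀ (by linarith) (by norm_num)]; linarith)]
      have h1 : 5*(2*t/(2*t+1))-1 = (8*t-1)/(2*t+1) := by field_simp; try ring
      have hB : 5*(2*t/(2*t+1))-1 ≠ 0 := by
        rw [h1]; exact ne_of_gt (div_pos (by linarith) (by linarith))
      rw [div_eq_div_iff hB hb4]; field_simp [hb1]; try ring; try tauto
    have e3 : g₂ t = (4*t-1)/(5*t-1) := g2_b h13 h12
    have e4 : g₂ ((4*t-1)/(5*t-1)) = (5*t-1)/(6*t-1) := by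
      rw [g2_c (by rw [div_lt_div_iff₀ (by norm_num) (by linarith)]; linarith)
        (by rw [div_le_one (by linarith)]; linarith)]
      have h1 : 2-(4*t-1)/(5*t-1) = (6*t-1)/(5*t-1) := by field_simp [show (t*5-1 : ℝ) ≠ 0 by rw [mul_comm]; exact hb2]; try ring
      have hB : 2-(4*t-1)/(5*t-1) ≠ 0 := by
        rw [h1]; exact ne_of_gt (div_pos (by linarith) (by linarith))
      rw [div_eq_div_iff hB hb3]; field_simp [hb2, show (t*5-1 : ℝ) ≠ 0 by rw [mul_comm]; exact hb2]; try ring; try tauto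
    have e5 : g₁ ((5*t-1)/(6*t-1)) = (6*t-1)/(8*t-1) := by
      rw [g1_hi (by rw [div_lt_div_iff₀ (by norm_num) (by linarith)]; linarith)
        (by rw [div_le_one (by linarith)]; linarith)]
      have h1 : 3-2*((5*t-1)/(6*t-1)) = (8*t-1)/(6*t-1) := by field_simp [show (t*6-1 : ℝ) ≠ 0 by rw [mul_comm]; exact hb3]; try ring
      have hB : 3-2*((5*t-1)/(6*t-1)) ≠ 0 := by
        rw [h1]; exact ne_of_gt (div_pos (by linarith) (by linarith))
      rw [div_eq_div_iff hB hb4]; field_simp [hb3, show (t*6-1 : ℝ) ≠ 0 by rw [mul_comm]; exact hb3]; try ring; try tauto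
    rw [e1, e2, e3, e4, e5]
  rcases le_or_gt t 1 with h1 | h1
  · -- 1/2 < t ≤ 1
    have hb1 : (3-2*t : ℝ) ≠ 0 := ne_of_gt (by linarith)
    have hb2 : (2-t : ℝ) ≠ 0 := ne_of_gt (by linarith)
    have hb3 : (5-4*t : ℝ) ≠ 0 := ne_of_gt (by linarith)
    have e1 : g₁ t = 1/(3-2*t) := g1_hi h12 h1
    have e2 : g₂ (1/(3-2*t)) = (3-2*t)/(5-4*t) := by
      rw [g2_c (by rw [div_lt_div_iff₀ (by norm_num) (by linarith)]; linarith)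
        (by rw [div_le_one (by linarith)]; linarith)]
      have hh : 2-1/(3-2*t) = (5-4*t)/(3-2*t) := by field_simp; try ring
      have hB : 2-1/(3-2*t) ≠ 0 := by
        rw [hh]; exact ne_of_gt (div_pos (by linarith) (by linarith))
      rw [div_eq_div_iff hB hb3]; field_simp [hb1, show (3-t*2 : ℝ) ≠ 0 by rw [mul_comm]; exact hb1]; try ring; try tauto
    have e3 : g₂ t = 1/(2-t) := g2_c h12 h1
    have e4 : g₂ (1/(2-t)) = (2-t)/(3-2*t) := by
      rw [g2_c (by rw [div_lt_div_iff₀ (by norm_num) (by linarith)]; linarith)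
        (by rw [div_le_one (by linarith)]; linarith)]
      have hh : 2-1/(2-t) = (3-2*t)/(2-t) := by field_simp; try ring
      have hB : 2-1/(2-t) ≠ 0 := by
        rw [hh]; exact ne_of_gt (div_pos (by linarith) (by linarith))
      rw [div_eq_div_iff hB hb1]; field_simp [hb2]; try ring; try tauto
    have e5 : g₁ ((2-t)/(3-2*t)) = (3-2*t)/(5-4*t) := by
      rw [g1_hi (by rw [div_lt_div_iff₀ (by norm_num) (by linarith)]; linarith)
        (by rw [div_le_one (by linarith)]; linarith)]
      have hh : 3-2*((2-t)/(3-2*t)) = (5-4*t)/(3-2*t) := by field_simp; try ring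
      have hB : 3-2*((2-t)/(3-2*t)) ≠ 0 := by
        rw [hh]; exact ne_of_gt (div_pos (by linarith) (by linarith))
      rw [div_eq_div_iff hB hb3]; field_simp [hb1, show (3-t*2 : ℝ) ≠ 0 by rw [mul_comm]; exact hb1]; try ring; try tauto
    rw [e1, e2, e3, e4, e5]
  · simp only [g1_gt h1, g2_gt h1]
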